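/- Fix x > 0 and suppose y = max_{t∈(0,∞)} [(x-γ)t - ln Γ(1+t)]. Then y > (3/(2π²))·x², hence x < π·√(2y/3). -/

import Mathlib

open Real Filter Finset Topology

lemma sub_sq_div_two_le_log {u : ℝ} (hu : 0 ≤ u) : u - u ^ 2 / 2 ≤ Real.log (1 + u) := by
  set f : ℝ → ℝ := fun w => Real.log (1 + w) - w + w ^ 2 / 2 with hf
  have key : ∀ v : ℝ, 0 ≤ v → HasDerivAt f (v ^ 2 / (1 + v)) v := by
    intro v hv
    have hv0 : (0:ℝ) < 1 + v := by linarith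
    have h1 : HasDerivAt (fun w : ℝ => Real.log (1 + w)) (1 / (1 + v)) v := by
      have := (Real.hasDerivAt_log hv0.ne').comp v ((hasDerivAt_id v).const_add 1)
      simpa [one_div, Function.comp_def] using this
    have h2 : HasDerivAt (fun w : ℝ => w ^ 2 / 2) v v := by
      have := (hasDerivAt_pow 2 v).div_const 2
      refine this.congr_deriv ?_
      push_cast
      ring
    have := (h1.sub (hasDerivAt_id v)).add h2
    refine this.congr_deriv ?_
    field_simp
    ring
  have mono : MonotoneOn f (Set.Ici (0:ℝ)) := by
    apply monotoneOn_of_deriv_nonneg (convex_Ici 0)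
    · exact fun v hv => (key v hv).continuousAt.continuousWithinAt
    · intro v hv
      rw [interior_Ici] at hv
      exact ((key v (le_of_lt hv)).differentiableAt).differentiableWithinAt
    · intro v hv
      rw [interior_Ici] at hv
      have hv' : 0 < v := hv
      rw [(key v hv'.le).deriv]
      have : (0:ℝ) < 1 + v := by linarith
      positivity
  have h0 : f 0 = 0 := by simp [hf]
  have := mono (Set.self_mem_Ici) hu hu
  rw [h0] at this
  simp only [hf] at this
  linarith

lemma sum_inv_sq_le (n : ℕ) : ∑ j ∈ range n, (1:ℝ) / ((j:ℝ) + 1) ^ 2 ≤ π ^ 2 / 6 := by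
  have h := hasSum_zeta_two
  have h2 : ∑ j ∈ range n, (1:ℝ) / ((j:ℝ) + 1) ^ 2 = ∑ i ∈ range (n + 1), (1:ℝ) / (i:ℝ) ^ 2 := by
    rw [Finset.sum_range_succ' (fun i => (1:ℝ) / (i:ℝ) ^ 2) n]
    push_cast
    simp
  rw [h2]
  exact sum_le_hasSum _ (fun i _ => by positivity) h

lemma sum_log_eq_log_factorial (m : ℕ) :
    ∑ j ∈ range m, Real.log ((j:ℝ) + 1) = Real.log (Nat.factorial m : ℝ) := by
  induction m with
  | zero => simp
  | succ k ih =>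
    rw [Finset.sum_range_succ, ih, Nat.factorial_succ]
    push_cast
    rw [Real.log_mul (by positivity) (by
      exact_mod_cast Nat.cast_ne_zero.mpr (Nat.factorial_ne_zero k))]
    ring

lemma log_Gamma_le {t : ℝ} (ht : 0 ≤ t) :
    Real.log (Real.Gamma (1 + t)) ≤ -Real.eulerMascheroniConstant * t + π ^ 2 / 12 * t ^ 2 := by
  have ht1 : (0:ℝ) < 1 + t := by linarith
  have hGpos : 0 < Real.Gamma (1 + t) := Real.Gamma_pos_of_pos ht1
  have hG := Real.GammaSeq_tendsto_Gamma (1 + t)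
  have hlog : Tendsto (fun n => Real.log (Real.GammaSeq (1 + t) n)) atTop
      (𝓝 (Real.log (Real.Gamma (1 + t)))) :=
    (Real.continuousAt_log hGpos.ne').tendsto.comp hG
  have haux : Tendsto (fun n : ℕ => ((harmonic (n+1) : ℝ) - Real.log ((n:ℝ) + 1)))
      atTop (𝓝 Real.eulerMascheroniConstant) := by
    have := Real.tendsto_harmonic_sub_log.comp (tendsto_add_atTop_nat 1)
    apply this.congr
    intro n
    simp only [Function.comp_apply]
    push_cast
    ring_nf
  have hb : Tendsto (fun n : ℕ =>
      -t * ((harmonic (n+1) : ℝ) - Real.log ((n:ℝ) + 1)) + π ^ 2 / 12 * t ^ 2) atTop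
      (𝓝 (-Real.eulerMascheroniConstant * t + π ^ 2 / 12 * t ^ 2)) := by
    have := (haux.const_mul (-t)).add_const (π ^ 2 / 12 * t ^ 2)
    convert this using 2
    ring
  refine le_of_tendsto_of_tendsto hlog hb ?_
  filter_upwards [eventually_ge_atTop 1] with n hn
  have hnpos : (0:ℝ) < (n:ℝ) := by exact_mod_cast hn
  have hfac : ∀ j ∈ range (n + 1), (1 + t + (j:ℝ)) ≠ 0 := by
    intro j _
    have hj : (0:ℝ) ≤ (j:ℝ) := Nat.cast_nonneg j
    positivity
  have hprodpos : 0 < ∏ j ∈ range (n + 1), (1 + t + (j:ℝ)) := by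
    apply Finset.prod_pos
    intro j _
    have hj : (0:ℝ) ≤ (j:ℝ) := Nat.cast_nonneg j
    positivity
  have hGS : Real.GammaSeq (1 + t) n =
      (n:ℝ) ^ (1 + t : ℝ) * (Nat.factorial n : ℝ) /
        ∏ j ∈ range (n + 1), (1 + t + (j:ℝ)) := rfl
  have hfacpos : (0:ℝ) < (Nat.factorial n : ℝ) := by
    exact_mod_cast Nat.factorial_pos n
  have hlogGS : Real.log (Real.GammaSeq (1 + t) n) =
      (1 + t) * Real.log n + Real.log (Nat.factorial n : ℝ) -
        ∑ j ∈ range (n + 1), Real.log (1 + t + (j:ℝ)) := by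
    rw [hGS, Real.log_div (by positivity) hprodpos.ne',
      Real.log_mul (by positivity) hfacpos.ne', Real.log_rpow hnpos,
      Real.log_prod hfac]
  have hsplit : ∀ j : ℕ, Real.log (1 + t + (j:ℝ)) =
      Real.log ((j:ℝ) + 1) + Real.log (1 + t / ((j:ℝ) + 1)) := by
    intro j
    have hj1 : (0:ℝ) < (j:ℝ) + 1 := by positivity
    rw [← Real.log_mul hj1.ne' (by positivity)]
    congr 1
    field_simp
    ring
  have hsum : ∑ j ∈ range (n + 1), Real.log (1 + t + (j:ℝ)) =
      Real.log (Nat.factorial (n+1) : ℝ) +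
        ∑ j ∈ range (n + 1), Real.log (1 + t / ((j:ℝ) + 1)) := by
    simp_rw [hsplit]
    rw [Finset.sum_add_distrib, sum_log_eq_log_factorial]
  -- lower bound each log(1 + t/(j+1))
  have hterm : ∀ j ∈ range (n + 1),
      t / ((j:ℝ) + 1) - t ^ 2 / 2 * ((1:ℝ) / ((j:ℝ) + 1) ^ 2) ≤
        Real.log (1 + t / ((j:ℝ) + 1)) := by
    intro j _
    have hj1 : (0:ℝ) < (j:ℝ) + 1 := by positivity
    have hu : 0 ≤ t / ((j:ℝ) + 1) := by positivity
    have := sub_sq_div_two_le_log hu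
    have heq : (t / ((j:ℝ) + 1)) ^ 2 / 2 = t ^ 2 / 2 * ((1:ℝ) / ((j:ℝ) + 1) ^ 2) := by
      rw [div_pow]
      ring
    linarith [heq ▸ this]
  have hsumlb : t * (harmonic (n+1) : ℝ) - t ^ 2 / 2 * (π ^ 2 / 6) ≤
      ∑ j ∈ range (n + 1), Real.log (1 + t / ((j:ℝ) + 1)) := by
    have h1 : ∑ j ∈ range (n + 1),
        (t / ((j:ℝ) + 1) - t ^ 2 / 2 * ((1:ℝ) / ((j:ℝ) + 1) ^ 2)) ≤
        ∑ j ∈ range (n + 1), Real.log (1 + t / ((j:ℝ) + 1)) :=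
      Finset.sum_le_sum hterm
    have h2 : ∑ j ∈ range (n + 1),
        (t / ((j:ℝ) + 1) - t ^ 2 / 2 * ((1:ℝ) / ((j:ℝ) + 1) ^ 2)) =
        t * (harmonic (n+1) : ℝ) -
          t ^ 2 / 2 * ∑ j ∈ range (n + 1), (1:ℝ) / ((j:ℝ) + 1) ^ 2 := by
      have hh : (harmonic (n+1) : ℝ) = ∑ j ∈ range (n + 1), ((j:ℝ) + 1)⁻¹ := by
        rw [harmonic]
        push_cast
        rfl
      rw [Finset.sum_sub_distrib]
      congr 1
      · rw [hh, Finset.mul_sum]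
        exact Finset.sum_congr rfl fun j _ => by rw [div_eq_mul_inv]
      · rw [← Finset.mul_sum]
    rw [h2] at h1
    have h3 := sum_inv_sq_le (n + 1)
    have h4 : t ^ 2 / 2 * ∑ j ∈ range (n + 1), (1:ℝ) / ((j:ℝ) + 1) ^ 2 ≤
        t ^ 2 / 2 * (π ^ 2 / 6) := by
      apply mul_le_mul_of_nonneg_left h3 (by positivity)
    linarith
  -- combine everything
  have hfact1 : Real.log (Nat.factorial (n+1) : ℝ) =
      Real.log ((n:ℝ) + 1) + Real.log (Nat.factorial n : ℝ) := by
    rw [Nat.factorial_succ]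
    push_cast
    rw [Real.log_mul (by positivity) hfacpos.ne']
  have hloglog : Real.log (n:ℝ) ≤ Real.log ((n:ℝ) + 1) :=
    Real.log_le_log hnpos (by linarith)
  have htmul : t * Real.log (n:ℝ) ≤ t * Real.log ((n:ℝ) + 1) :=
    mul_le_mul_of_nonneg_left hloglog ht
  rw [hlogGS, hsum, hfact1]
  nlinarith [hsumlb]

theorem chernoff_minus_bounds (x y : ℝ) (hx : 0 < x)
    (hy : IsGreatest
      ((fun t => (x - Real.eulerMascheroniConstant) * t - Real.log (Real.Gamma (1 + t))) ''
        Set.Ioi (0:ℝ)) y) :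
    3 / (2 * Real.pi ^ 2) * x ^ 2 < y ∧ x < Real.pi * Real.sqrt (2 * y / 3) := by
  have hpi : (0:ℝ) < π := Real.pi_pos
  set t0 : ℝ := 6 * x / π ^ 2 with ht0def
  have ht0 : 0 < t0 := by positivity
  have hmem : (x - Real.eulerMascheroniConstant) * t0 - Real.log (Real.Gamma (1 + t0)) ∈
      ((fun t => (x - Real.eulerMascheroniConstant) * t - Real.log (Real.Gamma (1 + t))) ''
        Set.Ioi (0:ℝ)) := ⟨t0, ht0, rfl⟩
  have hyge := hy.2 hmem
  have hlb := log_Gamma_le ht0.le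
  have hval : 3 / π ^ 2 * x ^ 2 ≤
      (x - Real.eulerMascheroniConstant) * t0 - Real.log (Real.Gamma (1 + t0)) := by
    have key : (x - Real.eulerMascheroniConstant) * t0 -
        (-Real.eulerMascheroniConstant * t0 + π ^ 2 / 12 * t0 ^ 2) = 3 / π ^ 2 * x ^ 2 := by
      rw [ht0def]
      field_simp
      ring
    linarith
  have h1 : 3 / (2 * π ^ 2) * x ^ 2 < y := by
    have : 3 / (2 * π ^ 2) * x ^ 2 < 3 / π ^ 2 * x ^ 2 := by
      apply mul_lt_mul_of_pos_right _ (by positivity)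
      rw [div_lt_div_iff₀ (by positivity) (by positivity)]
      nlinarith
    linarith
  refine ⟨h1, ?_⟩
  have hy0 : 0 < y := lt_trans (by positivity) h1
  have h1' : 3 * x ^ 2 < y * (2 * π ^ 2) := by
    rwa [div_mul_eq_mul_div, div_lt_iff₀ (by positivity)] at h1
  have hx2 : x ^ 2 < π ^ 2 * (2 * y / 3) := by nlinarith [h1']
  have := Real.sqrt_lt_sqrt (sq_nonneg x) hx2
  rwa [Real.sqrt_sq hx.le, Real.sqrt_mul (sq_nonneg π), Real.sqrt_sq hpi.le] at this
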